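/- arXiv:2506.09961 — 9 statements merged into one kernel-verified Lean document; each statement's English description precedes it below -/
import Mathlib

section
/- Let V be a finite type, s, t ∈ V with s ≠ t, y : V → ℝ with y s = 1 and y t = 1, and f, g : V → V → ℝ with 0 ≤ f a b and 0 ≤ g a b for all a, b ∈ V. Suppose: (i) for every v ≠ s, ∑_{w} f v w − ∑_{w} f w v = y v and ∑_{w} f w s = (∑_{v} y v) − 1; (ii) for every v ≠ t, ∑_{w} g w v − ∑_{w} g v w = y v and ∑_{w} g t w = (∑_{v} y v) − 1; (iii) for every ordered pair (a,b), f a b = 0 if and only if g a b = 0. Then for every w ∈ V one has f s w = 0, g s w = 0, f w t = 0, and g w t = 0; that is, there are no outgoing flows of either commodity from the entrance and no incoming flows of either commodity to the exit. -/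
/-- In the one-way parking lot MIP, there are no outgoing flows of either
commodity from the entrance `s` and no incoming flows of either commodity to
the exit `t`. -/
theorem no_outflow_entrance_no_inflow_exit {V : Type*} [Fintype V] (s t : V) (hst : s ≠ t)
    (y : V → ℝ) (f g : V → V → ℝ)
    (hys : y s = 1) (hyt : y t = 1)
    (hf : ∀ a b : V, 0 ≤ f a b) (hg : ∀ a b : V, 0 ≤ g a b)
    (hfcons : ∀ v : V, v ≠ s → (∑ w, f v w) - (∑ w, f w v) = y v)
    (hfsink : (∑ w, f w s) = (∑ v, y v) - 1)
    (hgcons : ∀ v : V, v ≠ t → (∑ w, g w v) - (∑ w, g v w) = y v)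
    (hgsource : (∑ w, g t w) = (∑ v, y v) - 1)
    (hfg : ∀ a b : V, f a b = 0 ↔ g a b = 0) :
    ∀ w : V, f s w = 0 ∧ g s w = 0 ∧ f w t = 0 ∧ g w t = 0 := by
  classical
  -- total flow conservation sums
  have hf0 : ∑ v, ((∑ w, f v w) - (∑ w, f w v)) = 0 := by
    rw [Finset.sum_sub_distrib]
    rw [Finset.sum_comm (f := fun v w => f w v)]
    ring
  have hg0 : ∑ v, ((∑ w, g w v) - (∑ w, g v w)) = 0 := by
    rw [Finset.sum_sub_distrib]
    rw [Finset.sum_comm (f := fun v w => g w v)]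
    ring
  have hsplitf : ∑ v, ((∑ w, f v w) - (∑ w, f w v))
      = ((∑ w, f s w) - (∑ w, f w s)) + ∑ v ∈ Finset.univ.erase s,
        ((∑ w, f v w) - (∑ w, f w v)) :=
    (Finset.add_sum_erase _ _ (Finset.mem_univ s)).symm
  have hsplitg : ∑ v, ((∑ w, g w v) - (∑ w, g v w))
      = ((∑ w, g w t) - (∑ w, g t w)) + ∑ v ∈ Finset.univ.erase t,
        ((∑ w, g w v) - (∑ w, g v w)) :=
    (Finset.add_sum_erase _ _ (Finset.mem_univ t)).symm
  have hys' : ∑ v ∈ Finset.univ.erase s, y v = (∑ v, y v) - 1 := by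
    have := (Finset.add_sum_erase _ y (Finset.mem_univ s)).symm
    rw [this, hys]; ring
  have hyt' : ∑ v ∈ Finset.univ.erase t, y v = (∑ v, y v) - 1 := by
    have := (Finset.add_sum_erase _ y (Finset.mem_univ t)).symm
    rw [this, hyt]; ring
  have hfe : ∑ v ∈ Finset.univ.erase s, ((∑ w, f v w) - (∑ w, f w v))
      = ∑ v ∈ Finset.univ.erase s, y v :=
    Finset.sum_congr rfl fun v hv => hfcons v (Finset.ne_of_mem_erase hv)
  have hge : ∑ v ∈ Finset.univ.erase t, ((∑ w, g w v) - (∑ w, g v w))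
      = ∑ v ∈ Finset.univ.erase t, y v :=
    Finset.sum_congr rfl fun v hv => hgcons v (Finset.ne_of_mem_erase hv)
  have houtf : ∑ w, f s w = 0 := by
    have := hsplitf
    rw [hf0, hfe, hys', hfsink] at this
    linarith
  have hing : ∑ w, g w t = 0 := by
    have := hsplitg
    rw [hg0, hge, hyt', hgsource] at this
    linarith
  have hfsw : ∀ w, f s w = 0 := fun w =>
    (Finset.sum_eq_zero_iff_of_nonneg (fun i _ => hf s i)).mp houtf w (Finset.mem_univ w)
  have hgwt : ∀ w, g w t = 0 := fun w =>
    (Finset.sum_eq_zero_iff_of_nonneg (fun i _ => hg i t)).mp hing w (Finset.mem_univ w)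
  intro w
  exact ⟨hfsw w, (hfg s w).mp (hfsw w), (hfg w t).mpr (hgwt w), hgwt w⟩
end

section
/- Let V be a finite type, S ⊆ V, s ∈ S, and f : V → V → ℝ with 0 ≤ f a b for all a, b ∈ V. Assume: (i) f a b = 0 whenever a ∉ S or b ∉ S; (ii) for every v ∈ S with v ≠ s, ∑_{w ∈ V} f v w − ∑_{w ∈ V} f w v = 1. Then for every v ∈ S one has Relation.ReflTransGen (fun a b => 0 < f a b) v s; that is, there is a directed path v = v₀, v₁, …, v_k = s with f v_i v_{i+1} > 0 at each step, and in particular every vertex of this path lies in S. Hence every active driving cell is connected to the entrance through active driving cells. -/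
/-- In the flow-based MIP for two-way parking lot design, every active driving
cell is connected to the entrance `s` through active driving cells: there is a
directed path along arcs carrying positive flow. -/
theorem active_cells_connected_to_entrance {V : Type*} [Fintype V] (S : Set V) (s : V)
    (hs : s ∈ S) (f : V → V → ℝ) (hf : ∀ a b : V, 0 ≤ f a b)
    (hsupp : ∀ a b : V, a ∉ S ∨ b ∉ S → f a b = 0)
    (hcons : ∀ v ∈ S, v ≠ s → (∑ w, f v w) - (∑ w, f w v) = 1) :
    ∀ v ∈ S, Relation.ReflTransGen (fun a b => 0 < f a b) v s := by
  classical
  intro v hv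
  by_contra hnr
  set R : V → Prop := fun a => Relation.ReflTransGen (fun a b => 0 < f a b) a s with hR
  set T : Finset V := Finset.univ.filter (fun a => ¬ R a) with hT
  have hvT : v ∈ T := by simp [hT, hR, hnr]
  have hsT : s ∉ T := by simp [hT, hR]; exact Relation.ReflTransGen.refl
  have hzero : ∀ a ∈ T, ∀ b ∉ T, f a b = 0 := by
    intro a ha b hb
    by_contra h
    have hpos : 0 < f a b := lt_of_le_of_ne (hf a b) (Ne.symm h)
    have hbR : R b := by simpa [hT] using hb
    have : R a := Relation.ReflTransGen.head hpos hbR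
    simp [hT, this] at ha
  have key : ∑ a ∈ T, ((∑ w, f a w) - (∑ w, f w a)) ≤ 0 := by
    have hsplit : ∑ a ∈ T, ((∑ w, f a w) - (∑ w, f w a))
        = (∑ a ∈ T, ∑ w ∈ Tᶜ, f a w) - (∑ a ∈ T, ∑ w ∈ Tᶜ, f w a) := by
      rw [Finset.sum_sub_distrib]
      have h1 : ∑ a ∈ T, ∑ w, f a w
          = (∑ a ∈ T, ∑ w ∈ T, f a w) + (∑ a ∈ T, ∑ w ∈ Tᶜ, f a w) := by
        rw [← Finset.sum_add_distrib]
        refine Finset.sum_congr rfl fun a _ => ?_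
        rw [Finset.sum_add_sum_compl]
      have h2 : ∑ a ∈ T, ∑ w, f w a
          = (∑ a ∈ T, ∑ w ∈ T, f w a) + (∑ a ∈ T, ∑ w ∈ Tᶜ, f w a) := by
        rw [← Finset.sum_add_distrib]
        refine Finset.sum_congr rfl fun a _ => ?_
        rw [Finset.sum_add_sum_compl]
      have h3 : ∑ a ∈ T, ∑ w ∈ T, f a w = ∑ a ∈ T, ∑ w ∈ T, f w a :=
        Finset.sum_comm
      rw [h1, h2, h3]
      ring
    rw [hsplit]
    have hz : (∑ a ∈ T, ∑ w ∈ Tᶜ, f a w) = 0 := by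
      refine Finset.sum_eq_zero fun a ha => Finset.sum_eq_zero fun w hw => ?_
      exact hzero a ha w (Finset.mem_compl.mp hw)
    have hnn : 0 ≤ ∑ a ∈ T, ∑ w ∈ Tᶜ, f w a :=
      Finset.sum_nonneg fun a _ => Finset.sum_nonneg fun w _ => hf w a
    rw [hz]
    linarith
  have hlow : (1 : ℝ) ≤ ∑ a ∈ T, ((∑ w, f a w) - (∑ w, f w a)) := by
    have hterm : ∀ a ∈ T, (0 : ℝ) ≤ (∑ w, f a w) - (∑ w, f w a) := by
      intro a ha
      by_cases haS : a ∈ S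
      · have hane : a ≠ s := by rintro rfl; exact hsT ha
        rw [hcons a haS hane]; norm_num
      · have h1 : ∑ w, f a w = 0 :=
          Finset.sum_eq_zero fun w _ => hsupp a w (Or.inl haS)
        have h2 : ∑ w, f w a = 0 :=
          Finset.sum_eq_zero fun w _ => hsupp w a (Or.inr haS)
        rw [h1, h2]; norm_num
    have hv1 : (∑ w, f v w) - (∑ w, f w v) = 1 := by
      refine hcons v hv ?_
      rintro rfl; exact hsT hvT
    calc (1 : ℝ) = (∑ w, f v w) - (∑ w, f w v) := hv1.symm
      _ ≤ ∑ a ∈ T, ((∑ w, f a w) - (∑ w, f w a)) :=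
          Finset.single_le_sum hterm hvT
  linarith
end

section
/- Let V be a finite type, S ⊆ V, t ∈ S, and g : V → V → ℝ with 0 ≤ g a b for all a, b ∈ V. Assume: (i) g a b = 0 whenever a ∉ S or b ∉ S; (ii) for every v ∈ S with v ≠ t, ∑_{w ∈ V} g w v − ∑_{w ∈ V} g v w = 1. Then for every v ∈ S one has Relation.ReflTransGen (fun a b => 0 < g a b) t v; that is, there is a directed path t = v₀, v₁, …, v_k = v with g v_i v_{i+1} > 0 at each step, and in particular every vertex of this path lies in S. Hence every active driving cell is reachable from the exit through active driving cells. -/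
/-- In the one-way parking lot MIP, every active driving cell is reachable from
the exit `t` through active driving cells: there is a directed path along arcs
carrying positive exit-commodity flow. -/
theorem active_cells_reachable_from_exit {V : Type*} [Fintype V] (S : Set V) (t : V)
    (ht : t ∈ S) (g : V → V → ℝ) (hg : ∀ a b : V, 0 ≤ g a b)
    (hsupp : ∀ a b : V, a ∉ S ∨ b ∉ S → g a b = 0)
    (hcons : ∀ v ∈ S, v ≠ t → (∑ w, g w v) - (∑ w, g v w) = 1) :
    ∀ v ∈ S, Relation.ReflTransGen (fun a b => 0 < g a b) t v := by
  classical
  intro v hv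
  by_contra hnr
  set P := fun a b => 0 < g a b with hP
  let U : Finset V := Finset.univ.filter fun u => u ∈ S ∧ ¬ Relation.ReflTransGen P t u
  have hvU : v ∈ U := by simp [U, hv]; exact hnr
  have htU : t ∉ U := by
    simp [U]
    intro _
    exact Relation.ReflTransGen.refl
  have hzero : ∀ u ∈ U, ∀ w ∉ U, g w u = 0 := by
    intro u hu w hw
    by_contra h
    have hpos : 0 < g w u := lt_of_le_of_ne (hg w u) (Ne.symm h)
    simp only [U, Finset.mem_filter, Finset.mem_univ, true_and] at hu hw
    have hwS : w ∈ S := by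
      by_contra hws
      exact h (hsupp w u (Or.inl hws))
    have hwr : Relation.ReflTransGen P t w := by
      by_contra hc
      exact hw ⟨hwS, hc⟩
    exact hu.2 (hwr.tail hpos)
  have hcard : ∑ u ∈ U, ((∑ w, g w u) - ∑ w, g u w) = (U.card : ℝ) := by
    rw [Finset.sum_congr rfl (g := fun _ => (1 : ℝ)) (fun u hu => ?_)]
    · simp
    · simp only [U, Finset.mem_filter, Finset.mem_univ, true_and] at hu
      have hne : u ≠ t := by
        rintro rfl
        exact hu.2 Relation.ReflTransGen.refl
      exact hcons u hu.1 hne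
  have hin : ∑ u ∈ U, ∑ w, g w u = ∑ u ∈ U, ∑ w ∈ U, g w u := by
    refine Finset.sum_congr rfl fun u hu => ?_
    symm
    apply Finset.sum_subset (Finset.subset_univ U)
    intro w _ hw
    exact hzero u hu w hw
  have hle : ∑ u ∈ U, ∑ w ∈ U, g w u ≤ ∑ u ∈ U, ∑ w, g u w := by
    rw [Finset.sum_comm]
    refine Finset.sum_le_sum fun w _ => ?_
    apply Finset.sum_le_sum_of_subset_of_nonneg (Finset.subset_univ U)
    intro i _ _
    exact hg w i
  have hnonpos : (U.card : ℝ) ≤ 0 := by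
    rw [← hcard, Finset.sum_sub_distrib, hin]
    linarith
  have : 0 < U.card := Finset.card_pos.mpr ⟨v, hvU⟩
  have : (0 : ℝ) < U.card := by exact_mod_cast this
  linarith
end

section
/- Let V be a finite type, s, t ∈ V, and v ∈ V with v ≠ s and v ≠ t. Let z : V → V → Prop satisfy ¬(z a b ∧ z b a) for all a, b ∈ V with a ≠ b, and let f, g : V → V → ℝ be nonnegative with f a a = 0 and g a a = 0 for every a, and such that 0 < f a b implies z a b and 0 < g a b implies z a b for all a, b. Suppose ∑_{w ∈ V} f v w − ∑_{w ∈ V} f w v = 1 and ∑_{w ∈ V} g w v − ∑_{w ∈ V} g v w = 1. Then there exist w₁, w₂ ∈ V with w₁ ≠ w₂, w₁ ≠ v, w₂ ≠ v, 0 < f v w₁, and 0 < g w₂ v. If moreover f a b = 0 and g a b = 0 whenever a ∉ S or b ∉ S for a set S ⊆ V, then w₁, w₂ ∈ S; hence v interacts with at least two distinct active neighbors and the one-way driving layout contains no dead ends or cul-de-sacs. -/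
/-- In the one-way parking lot MIP, a cell `v` other than the entrance `s` and
the exit `t` interacts with at least two distinct active neighbors: one
receiving positive entrance-commodity outflow and a different one sending
positive exit-commodity inflow. Hence the layout contains no dead ends. -/
theorem no_dead_ends {V : Type*} [Fintype V] (s t v : V) (hvs : v ≠ s) (hvt : v ≠ t)
    (z : V → V → Prop) (hz : ∀ a b : V, a ≠ b → ¬(z a b ∧ z b a))
    (f g : V → V → ℝ) (hf : ∀ a b : V, 0 ≤ f a b) (hg : ∀ a b : V, 0 ≤ g a b)
    (hfdiag : ∀ a : V, f a a = 0) (hgdiag : ∀ a : V, g a a = 0)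
    (hfz : ∀ a b : V, 0 < f a b → z a b) (hgz : ∀ a b : V, 0 < g a b → z a b)
    (hfv : (∑ w, f v w) - (∑ w, f w v) = 1)
    (hgv : (∑ w, g w v) - (∑ w, g v w) = 1) :
    ∃ w₁ w₂ : V, w₁ ≠ w₂ ∧ w₁ ≠ v ∧ w₂ ≠ v ∧ 0 < f v w₁ ∧ 0 < g w₂ v ∧
      ∀ S : Set V, (∀ a b : V, a ∉ S ∨ b ∉ S → f a b = 0 ∧ g a b = 0) →
        w₁ ∈ S ∧ w₂ ∈ S := by
  have hfsum : 0 < ∑ w, f v w := by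
    by_contra h
    push_neg at h
    have h1 : (0:ℝ) ≤ ∑ w, f v w := Finset.sum_nonneg fun w _ => hf v w
    have h2 : (0:ℝ) ≤ ∑ w, f w v := Finset.sum_nonneg fun w _ => hf w v
    nlinarith
  have hgsum : 0 < ∑ w, g w v := by
    by_contra h
    push_neg at h
    have h1 : (0:ℝ) ≤ ∑ w, g w v := Finset.sum_nonneg fun w _ => hg w v
    have h2 : (0:ℝ) ≤ ∑ w, g v w := Finset.sum_nonneg fun w _ => hg v w
    nlinarith
  obtain ⟨w₁, -, hw₁'⟩ := Finset.exists_ne_zero_of_sum_ne_zero hfsum.ne'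
  obtain ⟨w₂, -, hw₂'⟩ := Finset.exists_ne_zero_of_sum_ne_zero hgsum.ne'
  have hw₁ : 0 < f v w₁ := (hf v w₁).lt_of_ne (Ne.symm hw₁')
  have hw₂ : 0 < g w₂ v := (hg w₂ v).lt_of_ne (Ne.symm hw₂')
  have hw₁v : w₁ ≠ v := fun h => by simp [h, hfdiag] at hw₁
  have hw₂v : w₂ ≠ v := fun h => by simp [h, hgdiag] at hw₂
  have hne : w₁ ≠ w₂ := by
    rintro rfl
    exact hz v w₁ hw₁v.symm ⟨hfz v w₁ hw₁, hgz w₁ v hw₂⟩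
  refine ⟨w₁, w₂, hne, hw₁v, hw₂v, hw₁, hw₂, fun S hS => ⟨?_, ?_⟩⟩
  · by_contra h
    exact hw₁.ne' (hS v w₁ (Or.inr h)).1
  · by_contra h
    exact hw₂.ne' (hS w₂ v (Or.inl h)).2
end

section
/- Let G be a simple graph on a finite vertex type V, let S ⊆ V with s ∈ S, and let f : V → V → ℝ be nonnegative such that: (i) 0 < f a b implies G.Adj a b; (ii) f a b = 0 whenever a ∉ S or b ∉ S; (iii) ∑_{w ∈ V} f v w − ∑_{w ∈ V} f w v = 1 for every v ∈ S with v ≠ s. Then for every v ∈ S and every natural number d with d ≤ G.dist v s, there exists u ∈ S with G.dist v u = d. Consequently, the forward hop inequality y_v ≤ ∑_{u : dist(v,u) = d} y_u is satisfied by every feasible solution of the flow-based formulation, for every hop distance d up to the shortest hop distance from v to the entrance. -/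
/-- Validity of the forward hop inequalities: in any feasible solution of the
two-way flow formulation, for every active cell `v` and every hop distance `d`
up to the shortest hop distance from `v` to the entrance `s`, some active cell
lies at hop distance exactly `d` from `v`. -/
theorem forward_hop_inequality_valid {V : Type*} [Fintype V] (G : SimpleGraph V)
    (S : Set V) (s : V) (hs : s ∈ S) (f : V → V → ℝ)
    (hf : ∀ a b : V, 0 ≤ f a b)
    (hadj : ∀ a b : V, 0 < f a b → G.Adj a b)
    (hsupp : ∀ a b : V, a ∉ S ∨ b ∉ S → f a b = 0)
    (hcons : ∀ v ∈ S, v ≠ s → (∑ w, f v w) - (∑ w, f w v) = 1) :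
    ∀ v ∈ S, ∀ d : ℕ, d ≤ G.dist v s → ∃ u ∈ S, G.dist v u = d := by
  classical
  intro v hv d hd
  rcases Nat.eq_zero_or_pos d with rfl | hdpos
  · exact ⟨v, hv, SimpleGraph.dist_self⟩
  -- since 0 < d ≤ dist v s, v is reachable to s and v ≠ s
  have hds : G.dist v s ≠ 0 := by omega
  have hreach_vs : G.Reachable v s := SimpleGraph.Reachable.of_dist_ne_zero hds
  -- the set of active cells which are unreachable from v or at distance < d
  set T : Finset V :=
    Finset.univ.filter (fun u => u ∈ S ∧ (¬ G.Reachable v u ∨ G.dist v u < d)) with hT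
  have hvT : v ∈ T := by
    simp only [hT, Finset.mem_filter, Finset.mem_univ, true_and]
    exact ⟨hv, Or.inr (by simpa [SimpleGraph.dist_self] using hdpos)⟩
  have hsT : s ∉ T := by
    simp only [hT, Finset.mem_filter, Finset.mem_univ, true_and, not_and, not_or, not_lt]
    intro _
    exact ⟨not_not_intro hreach_vs, hd⟩
  -- every member of T is in S and differs from s
  have hTmem : ∀ u ∈ T, u ∈ S ∧ u ≠ s := by
    intro u hu
    refine ⟨?_, fun h => hsT (h ▸ hu)⟩
    simp only [hT, Finset.mem_filter, Finset.mem_univ, true_and] at hu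
    exact hu.1
  -- flow conservation summed over T
  have hsum1 : ∑ u ∈ T, ((∑ w, f u w) - (∑ w, f w u)) = (T.card : ℝ) := by
    rw [Finset.sum_congr rfl (fun u hu => hcons u (hTmem u hu).1 (hTmem u hu).2)]
    simp
  -- split each inner sum over T and Tᶜ
  have hsplit : ∑ u ∈ T, ((∑ w, f u w) - (∑ w, f w u))
      = (∑ u ∈ T, ∑ w ∈ Tᶜ, f u w) - (∑ u ∈ T, ∑ w ∈ Tᶜ, f w u) := by
    have h1 : ∀ u, (∑ w, f u w) = (∑ w ∈ T, f u w) + ∑ w ∈ Tᶜ, f u w := fun u =>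
      (Finset.sum_add_sum_compl T (fun w => f u w)).symm
    have h2 : ∀ u, (∑ w, f w u) = (∑ w ∈ T, f w u) + ∑ w ∈ Tᶜ, f w u := fun u =>
      (Finset.sum_add_sum_compl T (fun w => f w u)).symm
    simp only [h1, h2]
    rw [Finset.sum_sub_distrib, Finset.sum_add_distrib, Finset.sum_add_distrib,
      Finset.sum_comm (s := T) (t := T) (f := fun u w => f w u)]
    ring
  -- some positive flow leaves T
  have hex : ∃ a ∈ T, ∃ b ∈ Tᶜ, 0 < f a b := by
    by_contra h
    push_neg at h
    have hA : (∑ u ∈ T, ∑ w ∈ Tᶜ, f u w) = 0 := by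
      apply Finset.sum_eq_zero
      intro a ha
      apply Finset.sum_eq_zero
      intro b hb
      exact le_antisymm (h a ha b hb) (hf a b)
    have hB : 0 ≤ ∑ u ∈ T, ∑ w ∈ Tᶜ, f w u :=
      Finset.sum_nonneg fun a _ => Finset.sum_nonneg fun b _ => hf b a
    have hcard : (1 : ℝ) ≤ (T.card : ℝ) := by
      exact_mod_cast Finset.card_pos.mpr ⟨v, hvT⟩
    rw [hsplit, hA] at hsum1
    linarith
  obtain ⟨a, haT, b, hbTc, hab⟩ := hex
  have hbT : b ∉ T := Finset.mem_compl.mp hbTc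
  have hAdj : G.Adj a b := hadj a b hab
  have hbS : b ∈ S := by
    by_contra hbS
    exact absurd (hsupp a b (Or.inr hbS)) (ne_of_gt hab)
  -- a is reachable from v with dist < d
  simp only [hT, Finset.mem_filter, Finset.mem_univ, true_and] at haT
  have hra : G.Reachable v a := by
    by_contra hra
    exact hbT (by
      simp only [hT, Finset.mem_filter, Finset.mem_univ, true_and]
      exact ⟨hbS, Or.inl (fun hrb => hra (hrb.trans hAdj.symm.reachable))⟩)
  have hdista : G.dist v a < d := haT.2.resolve_left (not_not_intro hra)
  -- dist v b ≤ dist v a + 1 ≤ d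
  obtain ⟨p, hp⟩ := hra.exists_walk_length_eq_dist
  have hub : G.dist v b ≤ d := by
    have := SimpleGraph.dist_le (p.concat hAdj)
    rw [SimpleGraph.Walk.length_concat, hp] at this
    omega
  -- b ∉ T, b ∈ S, reachable ⇒ dist v b ≥ d
  have hlb : d ≤ G.dist v b := by
    by_contra hlt
    exact hbT (by
      simp only [hT, Finset.mem_filter, Finset.mem_univ, true_and]
      exact ⟨hbS, Or.inr (by omega)⟩)
  exact ⟨b, hbS, le_antisymm hub hlb⟩
end

section
/- Let G be a simple graph on a finite vertex type V, let S ⊆ V with s ∈ S, and let f : V → V → ℝ be nonnegative such that: (i) 0 < f a b implies G.Adj a b; (ii) f a b = 0 whenever a ∉ S or b ∉ S; (iii) ∑_{w ∈ V} f v w − ∑_{w ∈ V} f w v = 1 for every v ∈ S with v ≠ s. Then for every v ∈ S and every natural number d with d ≤ G.dist s v, there exists u ∈ S with G.dist s u = d. Consequently, the reverse hop inequality y_v ≤ ∑_{u : dist(s,u) = d} y_u is satisfied by every feasible solution of the flow-based formulation, for every hop distance d up to the shortest hop distance from the entrance to v. -/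
private lemma discrete_ivt (g : ℕ → ℕ) (h0 : g 0 = 0) :
    ∀ n : ℕ, (∀ k < n, g (k + 1) ≤ g k + 1) → ∀ d : ℕ, d ≤ g n → ∃ k ≤ n, g k = d := by
  intro n
  induction n with
  | zero => intro _ d hd; exact ⟨0, le_refl 0, by omega⟩
  | succ n ih =>
    intro hstep d hd
    by_cases hdn : d ≤ g n
    · obtain ⟨k, hk, hgk⟩ := ih (fun k hk => hstep k (by omega)) d hdn
      exact ⟨k, by omega, hgk⟩
    · have h1 : g (n + 1) ≤ g n + 1 := hstep n (by omega)
      exact ⟨n + 1, le_refl _, by omega⟩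

/-- Validity of the reverse hop inequalities: in any feasible solution of the
two-way flow formulation, for every active cell `v` and every hop distance `d`
up to the shortest hop distance from the entrance `s` to `v`, some active cell
lies at hop distance exactly `d` from the entrance. -/
theorem reverse_hop_inequality_valid {V : Type*} [Fintype V] (G : SimpleGraph V)
    (S : Set V) (s : V) (hs : s ∈ S) (f : V → V → ℝ)
    (hf : ∀ a b : V, 0 ≤ f a b)
    (hadj : ∀ a b : V, 0 < f a b → G.Adj a b)
    (hsupp : ∀ a b : V, a ∉ S ∨ b ∉ S → f a b = 0)
    (hcons : ∀ v ∈ S, v ≠ s → (∑ w, f v w) - (∑ w, f w v) = 1) :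
    ∀ v ∈ S, ∀ d : ℕ, d ≤ G.dist s v → ∃ u ∈ S, G.dist s u = d := by
  classical
  -- subgraph induced on S
  set G' : SimpleGraph V :=
    { Adj := fun a b => G.Adj a b ∧ a ∈ S ∧ b ∈ S
      symm := ⟨fun a b ⟨h, ha, hb⟩ => ⟨h.symm, hb, ha⟩⟩
      loopless := ⟨fun a ⟨h, _, _⟩ => G.loopless.irrefl a h⟩ } with hG'
  have hG'adj : ∀ {a b : V}, G'.Adj a b → G.Adj a b ∧ a ∈ S ∧ b ∈ S := fun h => h
  -- Step 1: every v ∈ S is G'-reachable from s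
  have reach : ∀ v ∈ S, G'.Reachable s v := by
    intro v hv
    by_contra hnr
    set C : Finset V := Finset.univ.filter (fun u => u ∈ S ∧ ¬ G'.Reachable s u) with hC
    have hvC : v ∈ C := by simp [hC, hv, hnr]
    have hmemC : ∀ u, u ∈ C ↔ u ∈ S ∧ ¬ G'.Reachable s u := by
      intro u; simp [hC]
    -- flow between C and outside C vanishes
    have hout : ∀ u ∈ C, ∀ w, w ∉ C → f u w = 0 := by
      intro u hu w hw
      rcases (hmemC u).1 hu with ⟨huS, hur⟩
      by_contra h0
      have hpos : 0 < f u w := lt_of_le_of_ne (hf u w) (Ne.symm h0)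
      have hwS : w ∈ S := by
        by_contra hws
        exact h0 (hsupp u w (Or.inr hws))
      have hadj' : G'.Adj u w := ⟨hadj u w hpos, huS, hwS⟩
      have : ¬ G'.Reachable s w := fun hr => hur (hr.trans hadj'.symm.reachable)
      exact hw ((hmemC w).2 ⟨hwS, this⟩)
    have hin : ∀ u ∈ C, ∀ w, w ∉ C → f w u = 0 := by
      intro u hu w hw
      rcases (hmemC u).1 hu with ⟨huS, hur⟩
      by_contra h0
      have hpos : 0 < f w u := lt_of_le_of_ne (hf w u) (Ne.symm h0)
      have hwS : w ∈ S := by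
        by_contra hws
        exact h0 (hsupp w u (Or.inl hws))
      have hadj' : G'.Adj w u := ⟨hadj w u hpos, hwS, huS⟩
      have : ¬ G'.Reachable s w := fun hr => hur (hr.trans hadj'.reachable)
      exact hw ((hmemC w).2 ⟨hwS, this⟩)
    have hsum1 : ∑ u ∈ C, ((∑ w, f u w) - (∑ w, f w u)) = (C.card : ℝ) := by
      rw [Finset.sum_congr rfl (fun u hu => by
        rcases (hmemC u).1 hu with ⟨huS, hur⟩
        have hne : u ≠ s := fun h => hur (by subst h; exact SimpleGraph.Reachable.refl u)
        exact hcons u huS hne)]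
      simp
    have hsum0 : ∑ u ∈ C, ((∑ w, f u w) - (∑ w, f w u)) = 0 := by
      have e1 : ∀ u ∈ C, (∑ w, f u w) = ∑ w ∈ C, f u w := by
        intro u hu
        rw [← Finset.sum_filter_add_sum_filter_not Finset.univ (fun w => w ∈ C)]
        have : ∑ w ∈ Finset.univ.filter (fun w => w ∉ C), f u w = 0 :=
          Finset.sum_eq_zero (fun w hw => hout u hu w (Finset.mem_filter.1 hw).2)
        rw [this, add_zero]
        congr 1
        ext w; simp
      have e2 : ∀ u ∈ C, (∑ w, f w u) = ∑ w ∈ C, f w u := by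
        intro u hu
        rw [← Finset.sum_filter_add_sum_filter_not Finset.univ (fun w => w ∈ C)]
        have : ∑ w ∈ Finset.univ.filter (fun w => w ∉ C), f w u = 0 :=
          Finset.sum_eq_zero (fun w hw => hin u hu w (Finset.mem_filter.1 hw).2)
        rw [this, add_zero]
        congr 1
        ext w; simp
      rw [Finset.sum_congr rfl (fun u hu => by rw [e1 u hu, e2 u hu])]
      rw [Finset.sum_sub_distrib, Finset.sum_comm (s := C) (t := C) (f := fun u w => f w u)]
      ring
    have : (C.card : ℝ) = 0 := by rw [← hsum1, hsum0]
    have : C.card = 0 := by exact_mod_cast this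
    rw [Finset.card_eq_zero] at this
    exact (Finset.notMem_empty v (this ▸ hvC))
  -- Step 2: walk along a G'-walk and discrete IVT on distances
  intro v hv d hd
  obtain ⟨p⟩ := reach v hv
  -- all vertices of p are in S
  have hmem : ∀ k, p.getVert k ∈ S := by
    intro k
    cases k with
    | zero => simpa [p.getVert_zero] using hs
    | succ j =>
      by_cases hj : j < p.length
      · exact (hG'adj (p.adj_getVert_succ hj)).2.2
      · rw [p.getVert_of_length_le (by omega)]; exact hv
  -- s is G-reachable to each vertex of p
  have hreach : ∀ k, G.Reachable s (p.getVert k) := by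
    intro k
    induction k with
    | zero => rw [p.getVert_zero]
    | succ j ih =>
      by_cases hj : j < p.length
      · exact ih.trans (hG'adj (p.adj_getVert_succ hj)).1.reachable
      · have h1 : p.getVert (j + 1) = v := p.getVert_of_length_le (by omega)
        have h2 : p.getVert j = v := p.getVert_of_length_le (by omega)
        rw [h1]; rw [h2] at ih; exact ih
  -- step bound on distances
  have hstep : ∀ k < p.length, G.dist s (p.getVert (k + 1)) ≤ G.dist s (p.getVert k) + 1 := by
    intro k hk
    obtain ⟨q, hq⟩ := (hreach k).exists_walk_length_eq_dist
    have hadjk : G.Adj (p.getVert k) (p.getVert (k + 1)) := (hG'adj (p.adj_getVert_succ hk)).1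
    have := SimpleGraph.dist_le (q.concat hadjk)
    rwa [SimpleGraph.Walk.length_concat, hq] at this
  have h0 : G.dist s (p.getVert 0) = 0 := by rw [p.getVert_zero]; simp
  have hn : d ≤ G.dist s (p.getVert p.length) := by rwa [p.getVert_length]
  obtain ⟨k, hk, hgk⟩ :=
    discrete_ivt (fun k => G.dist s (p.getVert k)) h0 p.length hstep d hn
  exact ⟨p.getVert k, hmem k, hgk⟩
end

section
/- Let V be a finite type, R : V → V → Prop an arc relation, S ⊆ V with s ∈ S, and f : V → V → ℝ nonnegative such that: (i) 0 < f a b implies R a b; (ii) f a b = 0 whenever a ∉ S or b ∉ S; (iii) ∑_{w ∈ V} f v w − ∑_{w ∈ V} f w v = 1 for every v ∈ S with v ≠ s. Let v ∈ S and let C ⊆ V be a vertex cut separating v from s, i.e. v ∉ C, s ∉ C, and ¬ Relation.ReflTransGen (fun a b => R a b ∧ b ∉ C) v s. Then C ∩ S ≠ ∅. Hence every feasible solution of the flow-based formulation satisfies the connectivity cut constraint y_v ≤ ∑_{c ∈ C} y_c for every vertex cut set C separating v from the entrance. -/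
/-- Validity of the connectivity cut constraints: in any feasible solution of
the two-way flow formulation, every vertex cut set `C` separating an active
cell `v` from the entrance `s` must contain an active cell. -/
theorem connectivity_cut_valid {V : Type*} [Fintype V] (R : V → V → Prop)
    (S : Set V) (s : V) (hs : s ∈ S) (f : V → V → ℝ)
    (hf : ∀ a b : V, 0 ≤ f a b)
    (harc : ∀ a b : V, 0 < f a b → R a b)
    (hsupp : ∀ a b : V, a ∉ S ∨ b ∉ S → f a b = 0)
    (hcons : ∀ v ∈ S, v ≠ s → (∑ w, f v w) - (∑ w, f w v) = 1)
    (v : V) (hv : v ∈ S) (C : Set V) (hvC : v ∉ C) (hsC : s ∉ C)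
    (hcut : ¬ Relation.ReflTransGen (fun a b => R a b ∧ b ∉ C) v s) :
    (C ∩ S).Nonempty := by
  classical
  by_contra hne
  rw [Set.not_nonempty_iff_eq_empty] at hne
  have hCS : ∀ u ∈ S, u ∉ C := fun u hu hc =>
    Set.eq_empty_iff_forall_notMem.mp hne u ⟨hc, hu⟩
  set step : V → V → Prop := fun a b => R a b ∧ b ∉ C with hstep
  set T : Finset V :=
    Finset.univ.filter (fun u => u ∈ S ∧ Relation.ReflTransGen step v u) with hT
  have hvT : v ∈ T := by
    simp only [hT, Finset.mem_filter, Finset.mem_univ, true_and]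
    exact ⟨hv, Relation.ReflTransGen.refl⟩
  -- no flow leaves T
  have hzero : ∀ u ∈ T, ∀ w ∈ Tᶜ, f u w = 0 := by
    intro u hu w hw
    by_contra h0
    have hpos : 0 < f u w := lt_of_le_of_ne (hf u w) (Ne.symm h0)
    have hwS : w ∈ S := by
      by_contra hwS
      exact h0 (hsupp u w (Or.inr hwS))
    have huT := (Finset.mem_filter.mp hu).2
    have hwT : w ∈ T := by
      refine Finset.mem_filter.mpr ⟨Finset.mem_univ _, hwS,
        huT.2.tail ⟨harc u w hpos, hCS w hwS⟩⟩
    exact (Finset.mem_compl.mp hw) hwT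
  have hsT : s ∉ T := by
    intro hsT
    exact hcut (Finset.mem_filter.mp hsT).2.2
  have hsum : ∑ u ∈ T, ((∑ w, f u w) - (∑ w, f w u)) = (T.card : ℝ) := by
    have hone : ∀ u ∈ T, (∑ w, f u w) - (∑ w, f w u) = 1 := by
      intro u hu
      have huT := (Finset.mem_filter.mp hu).2
      have hus : u ≠ s := fun h => hsT (h ▸ hu)
      exact hcons u huT.1 hus
    rw [Finset.sum_congr rfl hone]
    simp
  have hsplit : ∑ u ∈ T, ((∑ w, f u w) - (∑ w, f w u))
      = (∑ u ∈ T, ∑ w ∈ Tᶜ, f u w) - (∑ u ∈ T, ∑ w ∈ Tᶜ, f w u) := by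
    rw [Finset.sum_sub_distrib]
    have h1 : ∑ u ∈ T, ∑ w, f u w
        = ∑ u ∈ T, ∑ w ∈ T, f u w + ∑ u ∈ T, ∑ w ∈ Tᶜ, f u w := by
      rw [← Finset.sum_add_distrib]
      exact Finset.sum_congr rfl fun u _ => (Finset.sum_add_sum_compl T _).symm
    have h2 : ∑ u ∈ T, ∑ w, f w u
        = ∑ u ∈ T, ∑ w ∈ T, f w u + ∑ u ∈ T, ∑ w ∈ Tᶜ, f w u := by
      rw [← Finset.sum_add_distrib]
      exact Finset.sum_congr rfl fun u _ => (Finset.sum_add_sum_compl T _).symm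
    have h3 : ∑ u ∈ T, ∑ w ∈ T, f u w = ∑ u ∈ T, ∑ w ∈ T, f w u :=
      Finset.sum_comm
    rw [h1, h2, h3]
    ring
  have hout : ∑ u ∈ T, ∑ w ∈ Tᶜ, f u w = 0 :=
    Finset.sum_eq_zero fun u hu => Finset.sum_eq_zero fun w hw => hzero u hu w hw
  have hin : 0 ≤ ∑ u ∈ T, ∑ w ∈ Tᶜ, f w u :=
    Finset.sum_nonneg fun u _ => Finset.sum_nonneg fun w _ => hf w u
  have hle : (T.card : ℝ) ≤ 0 := by
    rw [← hsum, hsplit, hout]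
    linarith
  have hpos : 0 < T.card := Finset.card_pos.mpr ⟨v, hvT⟩
  have : (0 : ℝ) < T.card := by exact_mod_cast hpos
  linarith
end

section
/- Let V be a finite type, R : V → V → Prop an arc relation, and S ⊆ V a set of active driving anchors with s ∈ S such that every v ∈ S is joined to s by an R-path all of whose vertices lie in S. Let C, R₀ ⊆ V with s ∉ C and s ∉ R₀, and suppose every R-path from any vertex of R₀ to s contains a vertex of C. Let P be a finite type of parking fields with a set X ⊆ P of active parking fields and neighbor sets N : P → Finset V satisfying the accessibility condition: p ∈ X implies N p ∩ S ≠ ∅. Let m ∈ R₀ and let P₀ be a finite set of parking fields with (N p : Set V) ⊆ R₀ ∪ C for every p ∈ P₀, and assume the single-purpose bound (if m ∈ S then 1 else 0) + |{p ∈ P₀ : p ∈ X}| ≤ 1. Then (if m ∈ S then 1 else 0) + |{p ∈ P₀ : p ∈ X}| ≤ |{c ∈ C : c ∈ S}|; that is, the strengthened connectivity cut constraint y_m + ∑_{p ∈ P₀} x_p ≤ ∑_{c ∈ C} y_c is valid. -/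
open Classical

/-- Validity of the strengthened connectivity cut constraint
`y_m + ∑_{p ∈ P₀} x_p ≤ ∑_{c ∈ C} y_c` in the branch-and-cut reformulation of
the two-way parking lot MIP: for a vertex cut set `C` separating the region
`R₀` from the entrance `s`, a cell `m ∈ R₀`, and a collection `P₀` of parking
fields whose driving neighbors all lie in `R₀ ∪ C`. -/
theorem strengthened_connectivity_cut_valid {V : Type*} [Fintype V]
    (R : V → V → Prop) (S : Set V) (s : V) (hs : s ∈ S)
    (hconn : ∀ v ∈ S, Relation.ReflTransGen (fun a b => R a b ∧ a ∈ S ∧ b ∈ S) v s)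
    (C R₀ : Set V) (hsC : s ∉ C) (hsR : s ∉ R₀)
    (hcut : ∀ u ∈ R₀, ¬ Relation.ReflTransGen (fun a b => R a b ∧ a ∉ C ∧ b ∉ C) u s)
    {P : Type*} [Fintype P] (X : Set P) (N : P → Finset V)
    (hacc : ∀ p ∈ X, ((N p : Set V) ∩ S).Nonempty)
    (m : V) (hm : m ∈ R₀) (P₀ : Finset P)
    (hP₀ : ∀ p ∈ P₀, (N p : Set V) ⊆ R₀ ∪ C)
    (hsingle : (if m ∈ S then (1 : ℕ) else 0) + ({p | p ∈ P₀ ∧ p ∈ X} : Set P).ncard ≤ 1) :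
    (if m ∈ S then (1 : ℕ) else 0) + ({p | p ∈ P₀ ∧ p ∈ X} : Set P).ncard ≤
      ({c | c ∈ C ∧ c ∈ S} : Set V).ncard := by
  -- key lemma: any S-path from v to s either meets C∩S or avoids C entirely
  have key : ∀ v, Relation.ReflTransGen (fun a b => R a b ∧ a ∈ S ∧ b ∈ S) v s →
      (∃ c, c ∈ C ∧ c ∈ S) ∨
        Relation.ReflTransGen (fun a b => R a b ∧ a ∉ C ∧ b ∉ C) v s := by
    intro v hv
    induction hv using Relation.ReflTransGen.head_induction_on with
    | refl => exact Or.inr Relation.ReflTransGen.refl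
    | head h _ ih =>
      rename_i a b _
      obtain ⟨hR, haS, hbS⟩ := h
      by_cases haC : a ∈ C
      · exact Or.inl ⟨a, haC, haS⟩
      · rcases ih with hl | hr
        · exact Or.inl hl
        · by_cases hbC : b ∈ C
          · exact Or.inl ⟨b, hbC, hbS⟩
          · exact Or.inr (Relation.ReflTransGen.head ⟨hR, haC, hbC⟩ hr)
  -- from any u ∈ R₀ ∩ S, C ∩ S is nonempty
  have reach : ∀ u, u ∈ R₀ → u ∈ S → ∃ c, c ∈ C ∧ c ∈ S := by
    intro u huR huS
    rcases key u (hconn u huS) with h | h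
    · exact h
    · exact absurd h (hcut u huR)
  -- it suffices to show: LHS positive → C ∩ S nonempty
  rcases Nat.eq_zero_or_pos ((if m ∈ S then (1 : ℕ) else 0) +
      ({p | p ∈ P₀ ∧ p ∈ X} : Set P).ncard) with h0 | hpos
  · omega
  · have hcs : ∃ c, c ∈ C ∧ c ∈ S := by
      by_cases hmS : m ∈ S
      · exact reach m hm hmS
      · simp only [hmS, if_false, zero_add] at hpos
        have hne : ({p | p ∈ P₀ ∧ p ∈ X} : Set P).Nonempty := by
          by_contra hne
          rw [Set.not_nonempty_iff_eq_empty] at hne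
          rw [hne] at hpos
          simp at hpos
        obtain ⟨p, hpP, hpX⟩ := hne
        obtain ⟨v, hvN, hvS⟩ := hacc p hpX
        rcases hP₀ p hpP hvN with hvR | hvC
        · exact reach v hvR hvS
        · exact ⟨v, hvC, hvS⟩
    obtain ⟨c, hcC, hcS⟩ := hcs
    have : 1 ≤ ({c | c ∈ C ∧ c ∈ S} : Set V).ncard := by
      have : ({c | c ∈ C ∧ c ∈ S} : Set V).Nonempty := ⟨c, hcC, hcS⟩
      exact (Set.ncard_pos (Set.toFinite _)).mpr this
    omega
end

section
/- Let V be a finite type, S ⊆ V, s, t ∈ S, z : V → V → Prop, and f, g : V → V → ℝ nonnegative with f a b = 0 and g a b = 0 whenever a ∉ S or b ∉ S, such that 0 < f a b implies z a b and 0 < g a b implies z a b. Assume ∑_{w ∈ V} f v w − ∑_{w ∈ V} f w v = 1 for every v ∈ S with v ≠ s, and ∑_{w ∈ V} g w v − ∑_{w ∈ V} g v w = 1 for every v ∈ S with v ≠ t. Then for every v ∈ S, Relation.ReflTransGen (fun a b => z a b ∧ a ∈ S ∧ b ∈ S) v s and Relation.ReflTransGen (fun a b => z a b ∧ a ∈ S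 ∧ b ∈ S) t v; that is, in the orientation determined by z, every active driving cell can reach the entrance and is reachable from the exit along directed arcs through active cells. -/
open Finset

private lemma one_way_reach_aux {V : Type*} [Fintype V] (S : Set V) (s : V) (hs : s ∈ S)
    (z : V → V → Prop) (f : V → V → ℝ) (hf : ∀ a b : V, 0 ≤ f a b)
    (hfsupp : ∀ a b : V, a ∉ S ∨ b ∉ S → f a b = 0)
    (hfz : ∀ a b : V, 0 < f a b → z a b)
    (hfcons : ∀ v ∈ S, v ≠ s → (∑ w, f v w) - (∑ w, f w v) = 1) :
    ∀ v ∈ S, Relation.ReflTransGen (fun a b => z a b ∧ a ∈ S ∧ b ∈ S) v s := by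
  classical
  set r : V → V → Prop := fun a b => z a b ∧ a ∈ S ∧ b ∈ S with hr
  intro v hv
  by_contra hcon
  set A : Finset V := Finset.univ.filter (fun u => u ∈ S ∧ ¬ Relation.ReflTransGen r u s)
    with hA
  have hvA : v ∈ A := by simp [hA, hv, hcon]
  have hzero : ∀ u ∈ A, ∀ w ∉ A, f u w = 0 := by
    intro u hu w hw
    simp only [hA, Finset.mem_filter, Finset.mem_univ, true_and] at hu hw
    by_contra hne
    have hpos : 0 < f u w := lt_of_le_of_ne (hf u w) (Ne.symm hne)
    have hwS : w ∈ S := by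
      by_contra h
      exact hne (hfsupp u w (Or.inr h))
    have hws : Relation.ReflTransGen r w s := by
      by_contra h
      exact hw ⟨hwS, h⟩
    exact hu.2 (Relation.ReflTransGen.head ⟨hfz u w hpos, hu.1, hwS⟩ hws)
  have hT : ∑ u ∈ A, ((∑ w, f u w) - (∑ w, f w u)) = (A.card : ℝ) := by
    have h1 : ∀ u ∈ A, ((∑ w, f u w) - (∑ w, f w u)) = 1 := by
      intro u hu
      simp only [hA, Finset.mem_filter, Finset.mem_univ, true_and] at hu
      exact hfcons u hu.1 (fun h => (h ▸ hu.2) Relation.ReflTransGen.refl)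
    rw [Finset.sum_congr rfl h1]
    simp
  have hout : ∀ u ∈ A, ∑ w, f u w = ∑ w ∈ A, f u w :=
    fun u hu => (Finset.sum_subset (Finset.subset_univ A)
      (fun w _ hw => hzero u hu w hw)).symm
  have hin : ∀ u ∈ A, ∑ w ∈ A, f w u ≤ ∑ w, f w u :=
    fun u hu => Finset.sum_le_sum_of_subset_of_nonneg (Finset.subset_univ A)
      (fun w _ _ => hf w u)
  have hle : ∑ u ∈ A, ((∑ w, f u w) - (∑ w, f w u)) ≤ 0 := by
    have h1 : ∑ u ∈ A, ((∑ w, f u w) - (∑ w, f w u))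
        ≤ ∑ u ∈ A, ((∑ w ∈ A, f u w) - (∑ w ∈ A, f w u)) := by
      apply Finset.sum_le_sum
      intro u hu
      rw [hout u hu]
      exact sub_le_sub le_rfl (hin u hu)
    have h2 : ∑ u ∈ A, ((∑ w ∈ A, f u w) - (∑ w ∈ A, f w u)) = 0 := by
      rw [Finset.sum_sub_distrib, Finset.sum_comm, sub_self]
    linarith
  have hpos : (0 : ℝ) < A.card := by
    exact_mod_cast Finset.card_pos.mpr ⟨v, hvA⟩
  rw [hT] at hle
  linarith

/-- In the one-way parking lot MIP, in the orientation determined by the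
direction variables `z`, every active driving cell can reach the entrance `s`
and is reachable from the exit `t` along directed arcs through active cells. -/
theorem one_way_connectivity {V : Type*} [Fintype V] (S : Set V) (s t : V)
    (hs : s ∈ S) (ht : t ∈ S) (z : V → V → Prop) (f g : V → V → ℝ)
    (hf : ∀ a b : V, 0 ≤ f a b) (hg : ∀ a b : V, 0 ≤ g a b)
    (hfsupp : ∀ a b : V, a ∉ S ∨ b ∉ S → f a b = 0)
    (hgsupp : ∀ a b : V, a ∉ S ∨ b ∉ S → g a b = 0)
    (hfz : ∀ a b : V, 0 < f a b → z a b) (hgz : ∀ a b : V, 0 < g a b → z a b)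
    (hfcons : ∀ v ∈ S, v ≠ s → (∑ w, f v w) - (∑ w, f w v) = 1)
    (hgcons : ∀ v ∈ S, v ≠ t → (∑ w, g w v) - (∑ w, g v w) = 1) :
    ∀ v ∈ S,
      Relation.ReflTransGen (fun a b => z a b ∧ a ∈ S ∧ b ∈ S) v s ∧
      Relation.ReflTransGen (fun a b => z a b ∧ a ∈ S ∧ b ∈ S) t v := by
  intro v hv
  constructor
  · exact one_way_reach_aux S s hs z f hf hfsupp hfz hfcons v hv
  · have h := one_way_reach_aux S t ht (fun a b => z b a) (fun a b => g b a)
      (fun a b => hg b a) (fun a b hab => hgsupp b a hab.symm)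
      (fun a b h => hgz b a h) hgcons v hv
    have := Relation.ReflTransGen.mono
      (r := fun a b => z b a ∧ a ∈ S ∧ b ∈ S)
      (p := fun a b => (fun x y => z x y ∧ x ∈ S ∧ y ∈ S) b a)
      (fun a b hab => ⟨hab.1, hab.2.2, hab.2.1⟩) _ _ h
    exact (Relation.reflTransGen_swap).mp this
end
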